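/- For any nonempty family 𝔔 of pairwise disjoint subsets of m, the space K_∞(𝔔) is not a premetric compactum of any finite degree, because the zero function is not a Gδ point of K_∞(𝔔). -/

import Mathlib

open Filter Topology

/-- `s` is an initial segment of the branch `x ∈ m^ω`. -/
def PrefixF {m : ℕ} (s : List (Fin m)) (x : ℕ → Fin m) : Prop :=
  ∀ k, (h : k < s.length) → s.get ⟨k, h⟩ = x k

/-- The underlying Polish set `X_𝔔 = m^{<ω} ∪ (m^ω × 𝔔)`. -/
def XQ (m : ℕ) (Q : Set (Set (Fin m))) : Type :=
  List (Fin m) ⊕ ((ℕ → Fin m) × ↥Q)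

open Classical in
/-- The function `g_s : X_𝔔 → {0,1}`: `g_s(t) = 1` iff `t = s`, and `g_s(y,P) = 1` iff
`s⌢ξ` is an initial segment of `y` for some `ξ ∈ P`. -/
noncomputable def gfun (m : ℕ) (Q : Set (Set (Fin m))) (s : List (Fin m)) :
    XQ m Q → Bool := fun z =>
  match z with
  | .inl t => decide (t = s)
  | .inr yP => if ∃ ξ ∈ (yP.2 : Set (Fin m)), PrefixF (s ++ [ξ]) yP.1 then true else false

open Classical in
/-- The indicator function of the singleton `{(x,P)} ⊆ X_𝔔`. -/
noncomputable def gind (m : ℕ) (Q : Set (Set (Fin m))) (x : ℕ → Fin m) (P : ↥Q) :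
    XQ m Q → Bool := fun z => if z = Sum.inr (x, P) then true else false

/-- The zero function on `X_𝔔`. -/
def gzero (m : ℕ) (Q : Set (Set (Fin m))) : XQ m Q → Bool := fun _ => false

/-- `K_∞(𝔔)`: the pointwise closure of `{g_s : s ∈ m^{<ω}}` in `{0,1}^{X_𝔔}`. -/
def Kinf (m : ℕ) (Q : Set (Set (Fin m))) : Set (XQ m Q → Bool) :=
  closure (Set.range (gfun m Q))

-- auxiliary
def other {m : ℕ} (hm : 2 ≤ m) (a : Fin m) : Fin m :=
  if a = ⟨0, by omega⟩ then ⟨1, by omega⟩ else ⟨0, by omega⟩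

lemma other_ne {m : ℕ} (hm : 2 ≤ m) (a : Fin m) : other hm a ≠ a := by
  unfold other
  split
  · rename_i h; rw [h]; intro hc; exact absurd (Fin.val_eq_val _ _ |>.2 hc) (by simp)
  · rename_i h; intro hc; exact h hc.symm

lemma mem_Kinf {m : ℕ} {Q : Set (Set (Fin m))} (g : XQ m Q → Bool)
    (h : ∀ F : Finset (XQ m Q), ∃ s, ∀ z ∈ F, gfun m Q s z = g z) :
    g ∈ Kinf m Q := by
  rw [Kinf, mem_closure_iff]
  intro O hO hgO
  obtain ⟨I, u, hu, hsub⟩ := isOpen_pi_iff.1 hO g hgO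
  obtain ⟨s, hs⟩ := h I
  refine ⟨gfun m Q s, hsub ?_, Set.mem_range_self s⟩
  intro z hz
  rw [hs z hz]
  exact (hu z hz).2

lemma gfun_inl {m : ℕ} {Q : Set (Set (Fin m))} (s t : List (Fin m)) :
    gfun m Q s (Sum.inl t) = decide (t = s) := rfl

open Classical in
lemma gfun_inr {m : ℕ} {Q : Set (Set (Fin m))} (s : List (Fin m)) (y : ℕ → Fin m) (P : ↥Q) :
    gfun m Q s (Sum.inr (y, P)) =
      if ∃ ξ ∈ (P : Set (Fin m)), PrefixF (s ++ [ξ]) y then true else false := rfl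

lemma gzero_mem {m : ℕ} {Q : Set (Set (Fin m))} (hm : 2 ≤ m) : gzero m Q ∈ Kinf m Q := by
  apply mem_Kinf
  intro F
  classical
  set c : XQ m Q → ℕ := fun z => match z with | .inl t => t.length | .inr _ => 0 with hc
  set Lt := 1 + F.sup c with hLt
  set N := F.toList.length with hN
  set sfn : Fin (Lt + N) → Fin m := fun i =>
    if h : Lt ≤ (i : ℕ) then
      (match F.toList.get ⟨(i : ℕ) - Lt, by have := i.isLt; omega⟩ with
       | .inr yP => other hm (yP.1 (i : ℕ))
       | .inl _ => ⟨0, by omega⟩)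
    else ⟨0, by omega⟩ with hsfn
  refine ⟨List.ofFn sfn, ?_⟩
  intro z hz
  match z with
  | .inl t =>
      rw [gfun_inl]
      show _ = (gzero m Q (Sum.inl t))
      simp only [gzero, decide_eq_false_iff_not]
      intro hts
      have h1 : c (Sum.inl t) ≤ F.sup c := Finset.le_sup hz
      have h1' : t.length ≤ F.sup c := h1
      have h2 : t.length = Lt + N := by rw [hts]; simp
      omega
  | .inr (y, P) =>
      rw [gfun_inr]
      show _ = (gzero m Q (Sum.inr (y, P)))
      simp only [gzero, ite_eq_right_iff]
      rintro ⟨ξ, hξ, hpre⟩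
      exfalso
      obtain ⟨j, hj⟩ := List.mem_iff_get.1 ((Finset.mem_toList).2 hz)
      have hjN : (j : ℕ) < N := j.isLt
      have hiLt : Lt + (j : ℕ) < (List.ofFn sfn ++ [ξ]).length := by
        simp only [List.length_append, List.length_ofFn, List.length_singleton]; omega
      have hpj := hpre (Lt + (j : ℕ)) hiLt
      have hlt1 : Lt + (j : ℕ) < (List.ofFn sfn).length := by
        simp only [List.length_ofFn]; omega
      rw [List.get_eq_getElem, List.getElem_append_left hlt1, List.getElem_ofFn] at hpj
      have hval : sfn ⟨Lt + (j : ℕ), by simpa using hlt1⟩ = other hm (y (Lt + (j : ℕ))) := by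
        simp only [hsfn]
        rw [dif_pos (by omega)]
        have hidx : (⟨Lt + (j : ℕ) - Lt, by omega⟩ : Fin F.toList.length) = j := by
          ext; simp
        rw [hidx, hj]
      rw [hval] at hpj
      exact other_ne hm _ hpj

lemma gind_mem {m : ℕ} {Q : Set (Set (Fin m))} (hm : 2 ≤ m)
    (hdisj : Q.Pairwise Disjoint)
    (x : ℕ → Fin m) (P : ↥Q) (ξ₀ : Fin m) (hξ : ξ₀ ∈ (P : Set (Fin m)))
    (hx : ∀ k, Even k → x k = ξ₀) :
    gind m Q x P ∈ Kinf m Q := by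
  apply mem_Kinf
  intro F
  classical
  set c : XQ m Q → ℕ := fun z => match z with
    | .inl t => t.length
    | .inr yP => if h : yP.1 = x then 0
        else Nat.find (Function.ne_iff.1 h) with hc
  set K := 2 * (1 + F.sup c) with hK
  have hKeven : Even K := ⟨1 + F.sup c, by omega⟩
  set s : List (Fin m) := List.ofFn (fun i : Fin K => x i) with hs
  have hslen : s.length = K := by simp [hs]
  have hget : ∀ (ξ : Fin m) (j : ℕ) (hj : j < (s ++ [ξ]).length),
      (s ++ [ξ]).get ⟨j, hj⟩ = if hj' : j < K then x j else ξ := by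
    intro ξ j hj
    rw [List.get_eq_getElem]
    by_cases hj' : j < K
    · have hj2 : j < s.length := by omega
      rw [dif_pos hj', List.getElem_append_left hj2]
      simp [hs]
    · have hjK : j = K := by
        have : (s ++ [ξ]).length = K + 1 := by simp [hslen]
        omega
      have hj3 : s.length ≤ j := by omega
      rw [dif_neg hj', List.getElem_append_right hj3]
      simp [hjK, hslen]
  refine ⟨s, ?_⟩
  intro z hz
  have hsupz : c z ≤ F.sup c := Finset.le_sup hz
  have hczK : c z < K := by omega
  match z with
  | .inl t =>
      rw [gfun_inl]
      have ht : t.length < K := hczK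
      have : t ≠ s := by
        intro h; rw [h, hslen] at ht; omega
      simp [gind, this]
  | .inr (y, P') =>
      rw [gfun_inr]
      have hlenK : (s ++ [ξ₀]).length = K + 1 := by simp [hslen]
      by_cases heq : (Sum.inr (y, P') : XQ m Q) = Sum.inr (x, P)
      · rw [show gind m Q x P (Sum.inr (y, P')) = true from if_pos heq]
        have hyx : y = x := by
          have h2 : (y, P') = (x, P) := by injection heq
          exact congrArg Prod.fst h2
        have hP'P : P' = P := by
          have h2 : (y, P') = (x, P) := by injection heq
          exact congrArg Prod.snd h2
        rw [if_pos ?_]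
        refine ⟨ξ₀, hP'P ▸ hξ, ?_⟩
        intro k hk
        rw [hget]
        by_cases hk' : k < K
        · rw [dif_pos hk', hyx]
        · have hkK : k = K := by rw [hlenK] at hk; omega
          rw [dif_neg hk', hyx, hkK, hx K hKeven]
      · rw [show gind m Q x P (Sum.inr (y, P')) = false from if_neg heq]
        rw [if_neg ?_]
        rintro ⟨ξ, hξ', hpre⟩
        have hlen : (s ++ [ξ]).length = K + 1 := by simp [hslen]
        by_cases hyx : y = x
        · have hP'P : P' ≠ P := by
            intro h; exact heq (by rw [hyx, h])
          have hξK : ξ = ξ₀ := by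
            have h1 := hpre K (by omega)
            rw [hget] at h1
            rw [dif_neg (lt_irrefl K)] at h1
            rw [h1, hyx, hx K hKeven]
          have hPP' : Disjoint (P : Set (Fin m)) (P' : Set (Fin m)) :=
            hdisj P.2 P'.2 (fun h => hP'P (Subtype.ext h.symm))
          exact (Set.disjoint_left.1 hPP' hξ) (hξK ▸ hξ')
        · have hex : ∃ j, y j ≠ x j := Function.ne_iff.1 hyx
          have hcz : c (Sum.inr (y, P')) = Nat.find (Function.ne_iff.1 hyx) := by
            show (if h : y = x then 0 else Nat.find (Function.ne_iff.1 h)) = _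
            rw [dif_neg hyx]
          have hfind : Nat.find (Function.ne_iff.1 hyx) < K := by rw [← hcz]; exact hczK
          have h1 := hpre (Nat.find (Function.ne_iff.1 hyx)) (by omega)
          rw [hget] at h1
          rw [dif_pos hfind] at h1
          exact (Nat.find_spec (Function.ne_iff.1 hyx)) h1.symm

universe u

/-- `K` is a premetric compactum of degree at most `n`: there is a continuous surjection
onto a compact metrizable space with all fibers of cardinality at most `n`. -/
def PremetricLE (K : Type u) [TopologicalSpace K] (n : ℕ) : Prop :=
  ∃ (M : Type u) (tM : TopologicalSpace M) (h : K → M),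
    @CompactSpace M tM ∧ @TopologicalSpace.MetrizableSpace M tM ∧
    @Continuous K M _ tM h ∧ Function.Surjective h ∧
    ∀ x : M, Cardinal.mk (h ⁻¹' {x}) ≤ (n : Cardinal)

/-- For `m ≥ 2` and a nonempty family `𝔔` of pairwise disjoint nonempty subsets of `m`,
the zero function belongs to `K_∞(𝔔)` but is not a `Gδ` point of it, and consequently
`K_∞(𝔔)` is not a premetric compactum of any finite degree. -/
theorem Kinf_not_premetric (m : ℕ) (hm : 2 ≤ m) (Q : Set (Set (Fin m)))
    (hQ : Q.Nonempty) (hdisj : Q.Pairwise Disjoint) (hne : ∀ P ∈ Q, P.Nonempty) :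
    gzero m Q ∈ Kinf m Q ∧
    (¬ ∃ U : ℕ → Set (XQ m Q → Bool),
      (∀ k, IsOpen (U k)) ∧ (⋂ k, U k) ∩ Kinf m Q = {gzero m Q}) ∧
    (∀ n : ℕ, ¬ PremetricLE (↥(Kinf m Q)) n) := by
  classical
  have h0 : gzero m Q ∈ Kinf m Q := gzero_mem hm
  obtain ⟨P₀, hP₀⟩ := hQ
  obtain ⟨ξ₀, hξ₀⟩ := hne P₀ hP₀
  have h2 : ¬ ∃ U : ℕ → Set (XQ m Q → Bool),
      (∀ k, IsOpen (U k)) ∧ (⋂ k, U k) ∩ Kinf m Q = {gzero m Q} := by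
    rintro ⟨U, hUo, hUe⟩
    have hgzU : ∀ k, gzero m Q ∈ U k := by
      have hmem : gzero m Q ∈ (⋂ k, U k) ∩ Kinf m Q := by rw [hUe]; rfl
      exact fun k => Set.mem_iInter.1 hmem.1 k
    choose I u hIu hsub using fun k => isOpen_pi_iff.1 (hUo k) _ (hgzU k)
    set f : ℕ → (ℕ → Fin m) := fun n =>
      match (I n.unpair.1).toList.getD n.unpair.2 (Sum.inl []) with
      | .inr yP => yP.1
      | .inl _ => fun _ => ξ₀ with hf
    have hbranch : ∀ k (y : ℕ → Fin m) (P' : ↥Q), Sum.inr (y, P') ∈ I k → ∃ n, f n = y := by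
      intro k y P' hz
      obtain ⟨j, hj⟩ := List.mem_iff_get.1 ((Finset.mem_toList).2 hz)
      refine ⟨Nat.pair k (j : ℕ), ?_⟩
      have hj' : (I k).toList.getD (j : ℕ) (Sum.inl []) = Sum.inr (y, P') := by
        exact (List.getD_eq_getElem _ _ j.isLt).trans hj
      simp only [hf, Nat.unpair_pair]
      rw [hj']
    set x : ℕ → Fin m := fun k => if Even k then ξ₀ else other hm (f ((k - 1) / 2) k) with hxdef
    have hxeven : ∀ k, Even k → x k = ξ₀ := fun k hk => if_pos hk
    have hxne : ∀ n, x ≠ f n := by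
      intro n h
      have h1 : x (2 * n + 1) = f n (2 * n + 1) := congrFun h _
      have hodd : ¬ Even (2 * n + 1) := by rw [Nat.even_iff]; omega
      have h2' : x (2 * n + 1) = other hm (f ((2 * n + 1 - 1) / 2) (2 * n + 1)) := if_neg hodd
      have h3 : (2 * n + 1 - 1) / 2 = n := by omega
      rw [h3, h1] at h2'
      exact other_ne hm _ h2'.symm
    set Pz : ↥Q := ⟨P₀, hP₀⟩ with hPz
    have hg : gind m Q x Pz ∈ Kinf m Q := gind_mem hm hdisj x Pz ξ₀ hξ₀ hxeven
    have hgU : gind m Q x Pz ∈ ⋂ k, U k := by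
      refine Set.mem_iInter.2 fun k => hsub k (Set.mem_pi.2 ?_)
      intro zz hzz
      have hzval : gind m Q x Pz zz = false := by
        match zz with
        | .inl t => simp [gind]
        | .inr (y, P') =>
          simp only [gind]
          rw [if_neg]
          intro hcon
          have hpair : (y, P') = (x, Pz) := by injection hcon
          have hy : y = x := congrArg Prod.fst hpair
          obtain ⟨nn, hn⟩ := hbranch k y P' hzz
          exact hxne nn (by rw [← hy, hn])
      rw [hzval]
      exact (hIu k zz hzz).2
    have hmem2 : gind m Q x Pz ∈ ({gzero m Q} : Set _) := by
      rw [← hUe]; exact ⟨hgU, hg⟩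
    rw [Set.mem_singleton_iff] at hmem2
    have hcon : gind m Q x Pz (Sum.inr (x, Pz)) = false := by rw [hmem2]; rfl
    rw [show gind m Q x Pz (Sum.inr (x, Pz)) = true from if_pos rfl] at hcon
    simp at hcon
  refine ⟨h0, h2, ?_⟩
  intro n hpm
  obtain ⟨M, tM, hmap, hcomp, hmet, hcont, hsurj, hcard⟩ := hpm
  letI := tM
  haveI := hcomp
  haveI := hmet
  apply h2
  set p : ↥(Kinf m Q) := ⟨gzero m Q, h0⟩ with hp
  have hsing : IsGδ ({hmap p} : Set M) := IsGδ.singleton _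
  obtain ⟨V, hVo, hVe⟩ := hsing.eq_iInter_nat
  have hfin : (hmap ⁻¹' {hmap p}).Finite := by
    have hcn := hcard (hmap p)
    exact Cardinal.lt_aleph0_iff_set_finite.1 (lt_of_le_of_lt hcn (Cardinal.nat_lt_aleph0 n))
  have hclosed : IsClosed ((hmap ⁻¹' {hmap p}) \ {p}) :=
    (hfin.subset Set.diff_subset).isClosed
  set Vk : ℕ → Set ↥(Kinf m Q) :=
    fun k => hmap ⁻¹' (V k) ∩ ((hmap ⁻¹' {hmap p}) \ {p})ᶜ with hVk
  have hVko : ∀ k, IsOpen (Vk k) := fun k =>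
    ((hVo k).preimage hcont).inter hclosed.isOpen_compl
  have hVkeq : (⋂ k, Vk k) = {p} := by
    ext q
    simp only [Set.mem_iInter, hVk, Set.mem_inter_iff, Set.mem_preimage,
      Set.mem_compl_iff, Set.mem_diff, Set.mem_singleton_iff]
    constructor
    · intro hq
      have hq1 : hmap q ∈ ⋂ k, V k := Set.mem_iInter.2 fun k => (hq k).1
      rw [← hVe] at hq1
      have hq2 := (hq 0).2
      by_contra hne'
      exact hq2 ⟨hq1, hne'⟩
    · rintro rfl
      intro k
      constructor
      · have : hmap p ∈ ⋂ k, V k := by rw [← hVe]; rfl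
        exact Set.mem_iInter.1 this k
      · intro hc
        exact hc.2 rfl
  choose W hWo hWeq using fun k => isOpen_induced_iff.1 (hVko k)
  refine ⟨W, hWo, ?_⟩
  ext g
  simp only [Set.mem_inter_iff, Set.mem_iInter, Set.mem_singleton_iff]
  constructor
  · rintro ⟨hgW, hgK⟩
    have hmemV : (⟨g, hgK⟩ : ↥(Kinf m Q)) ∈ ⋂ k, Vk k := by
      refine Set.mem_iInter.2 fun k => ?_
      rw [← hWeq k]
      exact hgW k
    rw [hVkeq] at hmemV
    exact congrArg Subtype.val hmemV
  · rintro rfl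
    refine ⟨fun k => ?_, h0⟩
    have hpV : p ∈ Vk k := by
      have : p ∈ ⋂ k, Vk k := by rw [hVkeq]; rfl
      exact Set.mem_iInter.1 this k
    rw [← hWeq k] at hpV
    exact hpV
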